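/- arXiv:1503.02037 — 2 statements merged into one kernel-verified Lean document; each statement's English description precedes it below -/
import Mathlib

section
/- Let τ ∈ {0,1}^n have exactly k ones and let Y be the Young diagram of shape λ(τ) inside the k×(n−k) rectangle. Then there exists a weight-preserving bijection between the set of Catalan paths of size (n,k) constrained by Y and the set of Catalan alternative tableaux of size (n,k) of type τ; in particular, Σ_C wt(C) = Σ_T wt(T), where C ranges over Catalan paths constrained by Y and T ranges over Catalan alternative tableaux of type τ. -/
open Finset

/-- Number of 1's in the word `τ ∈ {0,1}^n` (encoded as `τ : Fin n → Bool`). -/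
def onesCount {n : ℕ} (τ : Fin n → Bool) : ℕ :=
  (univ.filter fun p : Fin n => τ p = true).card

/-- `lambdaOf τ i` is the number of 0's of `τ` following the `i`-th 1 of `τ`
(`i` is 1-based): a 0 at position `p` follows the `i`-th 1 iff at least `i`
ones of `τ` occur strictly before `p`.  For `i` larger than the number of ones
this is `0`, which gives the convention `λ_{k+1} = 0` for free. -/
def lambdaOf {n : ℕ} (τ : Fin n → Bool) (i : ℕ) : ℕ :=
  (univ.filter fun p : Fin n => τ p = false ∧
    i ≤ (univ.filter fun q : Fin n => q < p ∧ τ q = true).card).card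

/-- A filling of the Young diagram with row lengths `lam` (rows indexed top to
bottom by `Fin k`, columns left to right by `Fin m`, the diagram being
northwest-justified inside the `k × m` rectangle) with `α`'s (`some true`) and
`β`'s (`some false`), empty boxes being `none`, which makes it a Catalan
alternative tableau:
(o) all symbols lie in boxes of the diagram;
(i) every box above an `α` (same column, smaller row index) is empty;
(ii) every box left of a `β` (same row, smaller column index) is empty;
(iii) every box of the diagram which neither lies above an `α` nor left of a
`β` contains a symbol. -/
def IsCatalanFilling {k m : ℕ} (lam : Fin k → ℕ) (f : Fin k → Fin m → Option Bool) : Prop :=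
  (∀ (i : Fin k) (j : Fin m), f i j ≠ none → (j : ℕ) < lam i) ∧
  (∀ (i : Fin k) (j : Fin m), f i j = some true → ∀ i' : Fin k, i' < i → f i' j = none) ∧
  (∀ (i : Fin k) (j : Fin m), f i j = some false → ∀ j' : Fin m, j' < j → f i j' = none) ∧
  (∀ (i : Fin k) (j : Fin m), (j : ℕ) < lam i → f i j = none →
    (∃ i', i < i' ∧ f i' j = some true) ∨ (∃ j', j < j' ∧ f i j' = some false))

set_option synthInstance.maxSize 2000 in
set_option synthInstance.maxHeartbeats 1000000 in
instance {k m : ℕ} (lam : Fin k → ℕ) (f : Fin k → Fin m → Option Bool) :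
    Decidable (IsCatalanFilling lam f) := by
  unfold IsCatalanFilling; infer_instance

/-- The weight `(αβ)^n (1/α)^{fcol(T)} (1/β)^{frow(T)}` of a Catalan alternative
tableau of size `(n,k)`, where `fcol` is the number of `α`-free columns and
`frow` the number of `β`-free rows of the `k × (n-k)` rectangle. -/
noncomputable def tabWeight (a b : ℝ) (n : ℕ) {k m : ℕ}
    (f : Fin k → Fin m → Option Bool) : ℝ :=
  (a * b) ^ n * a⁻¹ ^ (univ.filter fun j : Fin m => ∀ i : Fin k, f i j ≠ some true).card
    * b⁻¹ ^ (univ.filter fun i : Fin k => ∀ j : Fin m, f i j ≠ some false).card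

/-- Extension of a finite sequence `g = (g_1, …, g_k)` (indexed here by `Fin k`)
to all of `ℕ` (1-based), with the conventions `g_0 = n - k` and `g_t = 0` for
`t > k`. -/
def extSeq (n k : ℕ) (g : Fin k → ℕ) : ℕ → ℕ := fun t =>
  if t = 0 then n - k else if h : 1 ≤ t ∧ t ≤ k then g ⟨t - 1, by omega⟩ else 0

/-- The path weight `pwt(C)` of the Catalan path of size `(n,k)` constrained by
the Young diagram of shape `lam`, encoded by `C = (C_1, …, C_k)` where `C_i`
(a vertical line of the rectangle, labelled `0, …, n-k` from the left) is the
position of the unique south step of the path in row `i`:  the product, over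
all edges of the path, of the weight of the edge, where the south edge in row
`i` has weight `1/β` if it lies on the (west) border of the rectangle
(`C_i = 0`) and `1` otherwise, and a west edge lying on the south boundary of
the Young diagram has weight `1/α` and `1` otherwise.  The west edges of the
path along the horizontal line `y = i` (`i = 0, …, k`, counted from the top)
run over `x ∈ [C_{i+1}, C_i)` with the conventions `C_0 = n-k`, `C_{k+1} = 0`,
and such an edge lies on the south boundary of the diagram exactly when
`λ_{i+1} ≤ x < λ_i`, with `λ_0 = n-k` and `λ_{k+1} = 0`. -/
noncomputable def pwt (a b : ℝ) (n k : ℕ) (lam C : Fin k → ℕ) : ℝ :=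
  (∏ i : Fin k, if C i = 0 then b⁻¹ else 1) *
    ∏ i ∈ range (k + 1), ∏ x ∈ Ico (extSeq n k C (i + 1)) (extSeq n k C i),
      if extSeq n k lam (i + 1) ≤ x ∧ x < extSeq n k lam i then a⁻¹ else 1

/-- The total weight of a Catalan path, `wt(C) = (αβ)^n pwt(C)`. -/
noncomputable def pathWt (a b : ℝ) (n k : ℕ) (lam C : Fin k → ℕ) : ℝ :=
  (a * b) ^ n * pwt a b n k lam C

/-- `C = (C_1, …, C_k)` encodes a lattice path (south and west steps, from the
northeast to the southwest corner of the `k × (n-k)` rectangle) constrained by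
the Young diagram of shape `lam`, i.e. `λ_i ≥ C_i ≥ C_{i+1} ≥ 0`. -/
def IsCatalanPath {k : ℕ} (lam C : Fin k → ℕ) : Prop :=
  (∀ i, C i ≤ lam i) ∧ ∀ i j : Fin k, i ≤ j → C j ≤ C i


section BVec
variable {k m : ℕ} (lam : Fin k → ℕ)

/-- Validity of a β-vector. -/
def ValidB (v : Fin k → ℕ) : Prop :=
  (∀ i, v i ≤ lam i) ∧ ∀ i i' : Fin k, i < i' → v i ≤ v i' ∨ lam i' < v i

/-- The filling determined by a β-vector. -/
noncomputable def fillingOf (v : Fin k → ℕ) : Fin k → Fin m → Option Bool := fun i j =>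
  if ((j : ℕ) + 1 = v i) then some false
  else if (v i ≤ (j : ℕ) ∧ (j : ℕ) < lam i ∧
      ∀ i' : Fin k, i < i' → ¬ (v i' ≤ (j : ℕ) ∧ (j : ℕ) < lam i')) then some true
  else none

variable {lam}

lemma fo_false_iff {v : Fin k → ℕ} {i : Fin k} {j : Fin m} :
    fillingOf lam v i j = some false ↔ (j : ℕ) + 1 = v i := by
  unfold fillingOf
  split_ifs with h1 h2 <;> simp [h1]

lemma fo_true_iff {v : Fin k → ℕ} {i : Fin k} {j : Fin m} :
    fillingOf lam v i j = some true ↔ (v i ≤ (j : ℕ) ∧ (j : ℕ) < lam i ∧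
      ∀ i' : Fin k, i < i' → ¬ (v i' ≤ (j : ℕ) ∧ (j : ℕ) < lam i')) := by
  unfold fillingOf
  split_ifs with h1 h2
  · constructor
    · intro h; exact absurd h (by simp)
    · rintro ⟨hle, -, -⟩; omega
  · exact iff_of_true rfl h2
  · exact iff_of_false (by simp) h2

lemma fo_ne_none {v : Fin k → ℕ} {i : Fin k} {j : Fin m} (h : fillingOf lam v i j ≠ none) :
    (j : ℕ) + 1 = v i ∨ fillingOf lam v i j = some true := by
  unfold fillingOf at h ⊢
  split_ifs at h ⊢ with h1 h2
  · exact Or.inl h1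
  · exact Or.inr rfl
  · exact absurd rfl h

/-- A valid β-vector gives a Catalan filling. -/
lemma isCatalanFilling_fillingOf {v : Fin k → ℕ} (hm : ∀ i, lam i ≤ m) (hv : ValidB lam v) :
    IsCatalanFilling lam (fillingOf (m := m) lam v) := by
  obtain ⟨hv1, hv2⟩ := hv
  refine ⟨?_, ?_, ?_, ?_⟩
  · intro i j h
    rcases fo_ne_none h with h1 | h2
    · have := hv1 i; omega
    · exact (fo_true_iff.1 h2).2.1
  · -- above an α is empty
    intro i j hij i' hlt
    have h := fo_true_iff.1 hij
    by_contra hne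
    rcases fo_ne_none hne with h1 | h2
    · rcases hv2 i' i hlt with hle | hgt <;> omega
    · exact (fo_true_iff.1 h2).2.2 i hlt ⟨h.1, h.2.1⟩
  · -- left of a β is empty
    intro i j hij j' hlt
    have h1 := fo_false_iff.1 hij
    have hj' : (j' : ℕ) < (j : ℕ) := hlt
    unfold fillingOf
    rw [if_neg (by omega), if_neg (by omega)]
  · -- coverage
    intro i j hjl hnone
    by_cases hbi : v i ≤ (j : ℕ)
    · left
      set S : Finset (Fin k) := univ.filter fun t => v t ≤ (j : ℕ) ∧ (j : ℕ) < lam t with hS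
      have hiS : i ∈ S := by simp [hS, hbi, hjl]
      have hSne : S.Nonempty := ⟨i, hiS⟩
      have hi'prop : v (S.max' hSne) ≤ (j : ℕ) ∧ (j : ℕ) < lam (S.max' hSne) := by
        simpa [hS] using S.max'_mem hSne
      have htrue : fillingOf lam v (S.max' hSne) j = some true := by
        rw [fo_true_iff]
        refine ⟨hi'prop.1, hi'prop.2, fun t hlt ht => ?_⟩
        have : t ∈ S := by simp [hS, ht.1, ht.2]
        exact absurd (S.le_max' t this) (not_le.2 hlt)
      refine ⟨S.max' hSne, lt_of_le_of_ne (S.le_max' i hiS) (fun h => ?_), htrue⟩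
      rw [← h] at htrue; simp [hnone] at htrue
    · right
      push_neg at hbi
      have hne1 : (j : ℕ) + 1 ≠ v i := by
        intro h; unfold fillingOf at hnone; rw [if_pos h] at hnone; cases hnone
      have hvi : (j : ℕ) + 1 < v i := by omega
      have hvm : v i ≤ m := le_trans (hv1 i) (hm i)
      refine ⟨⟨v i - 1, by omega⟩, by simp [Fin.lt_def]; omega, ?_⟩
      rw [fo_false_iff]; simp only [Fin.val_mk]; omega

end BVec

section BOf
variable {k m : ℕ} {lam : Fin k → ℕ}

/-- The β-vector of a filling: position of the β in each row (plus one), or 0. -/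
noncomputable def bOf (f : Fin k → Fin m → Option Bool) : Fin k → ℕ := fun i =>
  if h : ∃ j : Fin m, f i j = some false then ((Classical.choose h : Fin m) : ℕ) + 1 else 0

lemma bOf_spec {f : Fin k → Fin m → Option Bool} (hf : IsCatalanFilling lam f)
    {i : Fin k} {j : Fin m} : f i j = some false ↔ bOf f i = (j : ℕ) + 1 := by
  unfold bOf
  constructor
  · intro h
    rw [dif_pos ⟨j, h⟩]
    have hc := Classical.choose_spec (⟨j, h⟩ : ∃ j : Fin m, f i j = some false)
    set j0 := Classical.choose (⟨j, h⟩ : ∃ j : Fin m, f i j = some false)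
    rcases lt_trichotomy j0 j with hlt | heq | hgt
    · exact absurd hc (by rw [hf.2.2.1 i j h j0 hlt]; simp)
    · rw [heq]
    · exact absurd h (by rw [hf.2.2.1 i j0 hc j hgt]; simp)
  · intro h
    by_cases he : ∃ j : Fin m, f i j = some false
    · rw [dif_pos he] at h
      have hc := Classical.choose_spec he
      have he2 : Classical.choose he = j := Fin.ext (Nat.succ_injective h)
      rwa [← he2]
    · rw [dif_neg he] at h
      exact absurd h (by omega)

lemma bOf_eq_zero_iff {f : Fin k → Fin m → Option Bool} {i : Fin k} :
    bOf f i = 0 ↔ ∀ j : Fin m, f i j ≠ some false := by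
  unfold bOf
  split_ifs with h
  · simp only [Nat.succ_ne_zero, false_iff]
    push_neg
    exact ⟨_, Classical.choose_spec h⟩
  · push_neg at h
    simpa using h

lemma bOf_pos {f : Fin k → Fin m → Option Bool} {i : Fin k} (h : bOf f i ≠ 0) :
    ∃ j : Fin m, f i j = some false ∧ (j : ℕ) + 1 = bOf f i := by
  unfold bOf at h ⊢
  by_cases he : ∃ j : Fin m, f i j = some false
  · rw [dif_pos he] at h ⊢
    exact ⟨Classical.choose he, Classical.choose_spec he, rfl⟩
  · rw [dif_neg he] at h
    exact absurd rfl h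

lemma bOf_valid {f : Fin k → Fin m → Option Bool} (hf : IsCatalanFilling lam f) :
    ValidB lam (bOf f) := by
  constructor
  · intro i
    by_cases h : ∃ j : Fin m, f i j = some false
    · obtain ⟨j, hj⟩ := h
      have := (bOf_spec hf).1 hj
      have hlt := hf.1 i j (by rw [hj]; simp)
      omega
    · rw [bOf_eq_zero_iff.2 (by push_neg at h; simpa using h)]; omega
  · intro i i' hlt
    by_contra hcon
    push_neg at hcon
    obtain ⟨h1, h2⟩ := hcon
    have hvi : 1 ≤ bOf f i := by omega
    obtain ⟨j, hj, hj1⟩ := bOf_pos (f := f) (i := i) (by omega)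
    have hji' : (j : ℕ) < lam i' := by omega
    have hble : bOf f i' ≤ (j : ℕ) := by omega
    rcases hcase : f i' j with _ | b
    · rcases hf.2.2.2 i' j hji' hcase with ⟨i'', hgt, htrue⟩ | ⟨j', hgt, hfalse⟩
      · have := hf.2.1 i'' j htrue i (hlt.trans hgt)
        rw [this] at hj; cases hj
      · have := (bOf_spec hf).1 hfalse
        have : (j : ℕ) < (j' : ℕ) := hgt
        omega
    · cases b
      · have := (bOf_spec hf).1 hcase
        omega
      · have := hf.2.1 i' j hcase i hlt
        rw [this] at hj; cases hj

lemma fillingOf_bOf {f : Fin k → Fin m → Option Bool} (hf : IsCatalanFilling lam f) :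
    fillingOf (m := m) lam (bOf f) = f := by
  funext i j
  rcases hcase : f i j with _ | b
  · -- f i j = none : show fillingOf = none
    rcases h2 : fillingOf (m := m) lam (bOf f) i j with _ | b'
    · rfl
    · exfalso
      cases b'
      · -- β : bOf f i = j + 1 so f i j = some false
        have := (bOf_spec hf).2 ((fo_false_iff.1 h2).symm)
        rw [this] at hcase; cases hcase
      · -- α-cond holds for (i,j) although f i j = none
        obtain ⟨hle, hltl, hmax⟩ := fo_true_iff.1 h2
        rcases hf.2.2.2 i j hltl hcase with ⟨i'', hgt, htrue⟩ | ⟨j', hgt, hfalse⟩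
        · -- α below at i'': show bOf f i'' ≤ j < lam i'', contradicting hmax
          apply hmax i'' hgt
          refine ⟨?_, hf.1 i'' j (by rw [htrue]; simp)⟩
          -- β of row i'' is strictly left of j (or absent)
          by_cases hb : bOf f i'' = 0
          · omega
          · obtain ⟨j2, hj2, hj21⟩ := bOf_pos (f := f) (i := i'') hb
            rcases lt_trichotomy (j2 : ℕ) (j : ℕ) with h | h | h
            · omega
            · rw [Fin.ext (h : (j2:ℕ) = (j:ℕ))] at hj2
              rw [hj2] at htrue; cases htrue
            · have := hf.2.2.1 i'' j2 hj2 j (by exact h)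
              rw [this] at htrue; cases htrue
        · have := (bOf_spec hf).1 hfalse
          have hgt' : (j : ℕ) < (j' : ℕ) := hgt
          omega
  · cases b
    · rw [fo_false_iff.2 ((bOf_spec hf).1 hcase).symm]
    · -- f i j = some true : show α-cond
      rw [fo_true_iff.2 ?_]
      refine ⟨?_, hf.1 i j (by rw [hcase]; simp), ?_⟩
      · -- bOf f i ≤ j
        by_cases hb : bOf f i = 0
        · omega
        · obtain ⟨j2, hj2, hj21⟩ := bOf_pos (f := f) (i := i) hb
          rcases lt_trichotomy (j2 : ℕ) (j : ℕ) with h | h | h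
          · omega
          · rw [Fin.ext (h : (j2:ℕ) = (j:ℕ))] at hj2
            rw [hj2] at hcase; cases hcase
          · have := hf.2.2.1 i j2 hj2 j (by exact h)
            rw [this] at hcase; cases hcase
      · -- maximality: no row below with bOf ≤ j < lam
        intro i' hlt ⟨hle', hltl'⟩
        rcases h2 : f i' j with _ | b'
        · rcases hf.2.2.2 i' j hltl' h2 with ⟨i'', hgt, htrue⟩ | ⟨j', hgt, hfalse⟩
          · have := hf.2.1 i'' j htrue i (hlt.trans hgt)
            rw [this] at hcase; cases hcase
          · have := (bOf_spec hf).1 hfalse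
            have hgt' : (j : ℕ) < (j' : ℕ) := hgt
            omega
        · cases b'
          · have := (bOf_spec hf).1 h2
            omega
          · have := hf.2.1 i' j h2 i hlt
            rw [this] at hcase; cases hcase

lemma bOf_fillingOf {v : Fin k → ℕ} (hm : ∀ i, lam i ≤ m) (hv : ValidB lam v) :
    bOf (fillingOf (m := m) lam v) = v := by
  funext i
  by_cases h : v i = 0
  · rw [bOf_eq_zero_iff.2 fun j hj => by have := fo_false_iff.1 hj; omega, h]
  · have hvm : v i ≤ m := le_trans (hv.1 i) (hm i)
    have hfj : fillingOf (m := m) lam v i ⟨v i - 1, by omega⟩ = some false := by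
      rw [fo_false_iff]; simp only [Fin.val_mk]; omega
    have := (bOf_spec (isCatalanFilling_fillingOf hm hv)).1 hfj
    simp only [Fin.val_mk] at this
    omega

end BOf

section Sorting
variable {k : ℕ}

/-- The number of entries of `g` exceeding `x`. -/
def cnt (g : Fin k → ℕ) (x : ℕ) : ℕ := (univ.filter fun i => x < g i).card

/-- The multiset of values of `g`. -/
def msOf (g : Fin k → ℕ) : Multiset ℕ := (List.ofFn g : Multiset ℕ)

lemma msOf_eq_map (g : Fin k → ℕ) : msOf g = Multiset.map g univ.val := by
  rw [msOf, ← Fin.univ_val_map]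

lemma msOf_comp_perm (g : Fin k → ℕ) (σ : Equiv.Perm (Fin k)) :
    msOf (g ∘ σ) = msOf g := by
  rw [msOf_eq_map, msOf_eq_map]
  have : Multiset.map (⇑σ) univ.val = univ.val := by
    have := congrArg Finset.val (Finset.map_univ_equiv σ)
    simpa using this
  nth_rewrite 2 [← this]
  rw [Multiset.map_map]

open Classical in
lemma cnt_congr {g g' : Fin k → ℕ} (h : msOf g = msOf g') (x : ℕ) :
    cnt g x = cnt g' x := by
  have key : ∀ g'' : Fin k → ℕ, cnt g'' x = Multiset.countP (fun y => x < y) (msOf g'') := by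
    intro g''
    rw [msOf_eq_map, Multiset.countP_map, cnt]
    rfl
  rw [key, key, h]

lemma cnt_le (g : Fin k → ℕ) (x : ℕ) : cnt g x ≤ k := by
  simpa [cnt] using Finset.card_filter_le univ fun i => x < g i

/-- For an antitone tuple, value comparison is index comparison with the count. -/
lemma cnt_lt_iff {g : Fin k → ℕ} (hg : ∀ i j : Fin k, i ≤ j → g j ≤ g i) (t : Fin k) (x : ℕ) :
    x < g t ↔ (t : ℕ) < cnt g x := by
  unfold cnt
  constructor
  · intro h
    have hsub : Finset.Iic t ⊆ univ.filter fun i => x < g i := by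
      intro s hs
      simp only [Finset.mem_Iic] at hs
      simp only [Finset.mem_filter, Finset.mem_univ, true_and]
      exact lt_of_lt_of_le h (hg s t hs)
    have := Finset.card_le_card hsub
    rw [Fin.card_Iic] at this
    omega
  · intro h
    by_contra hc
    push_neg at hc
    have hsub : (univ.filter fun i => x < g i) ⊆ Finset.Iio t := by
      intro s hs
      simp only [Finset.mem_filter, Finset.mem_univ, true_and] at hs
      simp only [Finset.mem_Iio]
      by_contra hst
      push_neg at hst
      exact absurd (lt_of_lt_of_le hs (hg t s hst)) (not_lt.2 hc)
    have := Finset.card_le_card hsub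
    rw [Fin.card_Iio] at this
    omega

/-- Descending sort of a tuple. -/
noncomputable def sortDesc (g : Fin k → ℕ) : Fin k → ℕ := fun i => g (Tuple.sort g (Fin.rev i))

lemma sortDesc_eq_comp (g : Fin k → ℕ) :
    sortDesc g = g ∘ (Fin.revPerm.trans (Tuple.sort g)) := rfl

lemma msOf_sortDesc (g : Fin k → ℕ) : msOf (sortDesc g) = msOf g := by
  rw [sortDesc_eq_comp]; exact msOf_comp_perm g _

lemma rev_antitone : ∀ i j : Fin k, i ≤ j → Fin.rev j ≤ Fin.rev i := by
  intro i j h; rwa [Fin.rev_le_rev]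

lemma sortDesc_antitone (g : Fin k → ℕ) :
    ∀ i j : Fin k, i ≤ j → sortDesc g j ≤ sortDesc g i := by
  intro i j h
  exact Tuple.monotone_sort g (rev_antitone i j h)

/-- Two antitone tuples with the same multiset of values are equal. -/
lemma antitone_unique {g g' : Fin k → ℕ}
    (hg : ∀ i j : Fin k, i ≤ j → g j ≤ g i) (hg' : ∀ i j : Fin k, i ≤ j → g' j ≤ g' i)
    (h : msOf g = msOf g') : g = g' := by
  have hperm : List.Perm (List.ofFn (g ∘ Fin.rev)) (List.ofFn (g' ∘ Fin.rev)) := by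
    rw [← Multiset.coe_eq_coe]
    have h1 : msOf (g ∘ Fin.rev) = msOf g := msOf_comp_perm g Fin.revPerm
    have h2 : msOf (g' ∘ Fin.rev) = msOf g' := msOf_comp_perm g' Fin.revPerm
    show msOf (g ∘ Fin.rev) = msOf (g' ∘ Fin.rev)
    rw [h1, h2, h]
  have hs1 : List.SortedLE (List.ofFn (g ∘ Fin.rev)) := by
    rw [List.sortedLE_ofFn_iff]
    intro i j hij
    exact hg _ _ (by rwa [Fin.rev_le_rev])
  have hs2 : List.SortedLE (List.ofFn (g' ∘ Fin.rev)) := by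
    rw [List.sortedLE_ofFn_iff]
    intro i j hij
    exact hg' _ _ (by rwa [Fin.rev_le_rev])
  have heq := List.Perm.eq_of_sortedLE hs1 hs2 hperm
  have := List.ofFn_injective heq
  funext i
  have := congrFun this (Fin.rev i)
  simpa [Function.comp, Fin.rev_rev] using this

end Sorting

section Bij
variable {k : ℕ} {lam : Fin k → ℕ}

/-- Helper for injectivity: if two valid vectors agree below `t`, then `v' t ≤ v t`. -/
lemma validB_helper {v v' : Fin k → ℕ} (hv : ValidB lam v) (hv' : ValidB lam v')
    (hms : msOf v = msOf v') (t : Fin k) (hagree : ∀ s : Fin k, t < s → v s = v' s) :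
    v' t ≤ v t := by
  classical
  -- prefix multisets are equal
  have hsplit : ∀ g : Fin k → ℕ,
      msOf g = Multiset.map g ((univ.filter fun s : Fin k => s ≤ t)).val
        + Multiset.map g ((univ.filter fun s : Fin k => ¬ s ≤ t)).val := by
    intro g
    rw [msOf_eq_map, ← Multiset.map_add]
    congr 1
    symm
    rw [Finset.filter_val, Finset.filter_val, Multiset.filter_add_not]
  have hpre : Multiset.map v ((univ.filter fun s : Fin k => s ≤ t)).val
      = Multiset.map v' ((univ.filter fun s : Fin k => s ≤ t)).val := by
    have h1 := hsplit v
    have h2 := hsplit v'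
    have htail : Multiset.map v ((univ.filter fun s : Fin k => ¬ s ≤ t)).val
        = Multiset.map v' ((univ.filter fun s : Fin k => ¬ s ≤ t)).val := by
      apply Multiset.map_congr rfl
      intro s hs
      simp only [Finset.mem_val, Finset.mem_filter, Finset.mem_univ, true_and, not_le] at hs
      exact hagree s hs
    rw [h1, h2, htail] at hms
    exact add_right_cancel hms
  -- v' t appears among the prefix values of v
  have hmem : v' t ∈ Multiset.map v ((univ.filter fun s : Fin k => s ≤ t)).val := by
    rw [hpre]
    exact Multiset.mem_map_of_mem v' (by simp)
  obtain ⟨s, hs, hsv⟩ := Multiset.mem_map.1 hmem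
  simp only [Finset.mem_val, Finset.mem_filter, Finset.mem_univ, true_and] at hs
  rcases lt_or_eq_of_le hs with hlt | heq
  · rcases hv.2 s t hlt with hle | hgt
    · omega
    · -- v s = v' t ≤ lam t by validity of v'
      have := hv'.1 t
      omega
  · subst heq
    omega

/-- Injectivity: a valid vector is determined by its multiset of values. -/
lemma validB_ext {v v' : Fin k → ℕ} (hv : ValidB lam v) (hv' : ValidB lam v')
    (hms : msOf v = msOf v') : v = v' := by
  classical
  by_contra hne
  obtain ⟨s₀, hs₀⟩ := Function.ne_iff.1 hne
  obtain ⟨t0, ht0mem, ht0max⟩ := Finset.exists_max_image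
    (univ.filter fun s : Fin k => v s ≠ v' s) (fun s => s) ⟨s₀, by simp [hs₀]⟩
  simp only [Finset.mem_filter, Finset.mem_univ, true_and] at ht0mem
  have hagree : ∀ s : Fin k, t0 < s → v s = v' s := by
    intro s hs
    by_contra hne2
    exact absurd (ht0max s (by simp [hne2])) (not_le.2 hs)
  have h1 := validB_helper hv hv' hms t0 hagree
  have h2 := validB_helper hv' hv hms.symm t0 (fun s hs => (hagree s hs).symm)
  omega

/-- Surjectivity: every constrained nonincreasing path arises from a valid vector. -/
lemma exists_validB (hmono : ∀ i j : Fin k, i ≤ j → lam j ≤ lam i)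
    (C : Fin k → ℕ) (hC : IsCatalanPath lam C) :
    ∃ v : Fin k → ℕ, ValidB lam v ∧ msOf v = msOf C := by
  classical
  set P : Equiv.Perm (Fin k) → Prop := fun σ => ∀ i, C (σ i) ≤ lam i with hP
  have hne : (univ.filter P).Nonempty :=
    ⟨1, by
      simp only [Finset.mem_filter, Finset.mem_univ, true_and, hP]
      intro i; simpa using hC.1 i⟩
  obtain ⟨σ, hσmem, hσmax⟩ := Finset.exists_max_image (univ.filter P)
    (fun σ => ∑ i : Fin k, ((i : ℕ) + 1) * C (σ i)) hne
  simp only [Finset.mem_filter, Finset.mem_univ, true_and, hP] at hσmem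
  refine ⟨C ∘ σ, ⟨hσmem, ?_⟩, msOf_comp_perm C σ⟩
  intro i i' hlt
  by_contra hcon
  push_neg at hcon
  obtain ⟨h1, h2⟩ := hcon
  -- swap improves the potential
  set σ' := (Equiv.swap i i').trans σ with hσ'
  have hσ'P : P σ' := by
    intro t
    rcases eq_or_ne t i with rfl | hti
    · simp only [hσ', Equiv.trans_apply, Equiv.swap_apply_left]
      calc C (σ i') ≤ C (σ t) := le_of_lt h1
        _ ≤ lam t := hσmem t
    · rcases eq_or_ne t i' with rfl | hti'
      · simp only [hσ', Equiv.trans_apply, Equiv.swap_apply_right]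
        exact h2
      · simp only [hσ', Equiv.trans_apply, Equiv.swap_apply_of_ne_of_ne hti hti']
        exact hσmem t
  have hle := hσmax σ' (by
    simp only [Finset.mem_filter, Finset.mem_univ, true_and]; exact hσ'P)
  -- compute the two sums
  have hii' : i ≠ i' := ne_of_lt hlt
  have hsum : ∀ τ : Equiv.Perm (Fin k), ∑ t : Fin k, ((t : ℕ) + 1) * C (τ t)
      = ((i : ℕ) + 1) * C (τ i) + (((i' : ℕ) + 1) * C (τ i')
        + ∑ t ∈ (univ.erase i).erase i', ((t : ℕ) + 1) * C (τ t)) := by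
    intro τ
    rw [← Finset.add_sum_erase _ _ (mem_univ i),
      ← Finset.add_sum_erase _ _ (Finset.mem_erase.2 ⟨(ne_of_lt hlt).symm, mem_univ i'⟩)]
  have heq : ∀ t ∈ (univ.erase i).erase i', ((t : ℕ) + 1) * C (σ' t) = ((t : ℕ) + 1) * C (σ t) := by
    intro t htmem
    simp only [Finset.mem_erase] at htmem
    simp [hσ', Equiv.trans_apply, Equiv.swap_apply_of_ne_of_ne htmem.2.1 htmem.1]
  rw [hsum σ, hsum σ', Finset.sum_congr rfl heq] at hle
  simp only [hσ', Equiv.trans_apply, Equiv.swap_apply_left, Equiv.swap_apply_right] at hle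
  have hlt' : (i : ℕ) < (i' : ℕ) := hlt
  simp only [Function.comp_apply] at h1
  have hX : ((i' : ℕ) + 1) * C (σ i) = ((i : ℕ) + 1) * C (σ i) + ((i' : ℕ) - (i : ℕ)) * C (σ i) := by
    rw [← Nat.add_mul]; congr 1; omega
  have hY : ((i' : ℕ) + 1) * C (σ i') = ((i : ℕ) + 1) * C (σ i') + ((i' : ℕ) - (i : ℕ)) * C (σ i') := by
    rw [← Nat.add_mul]; congr 1; omega
  have hmul : ((i' : ℕ) - (i : ℕ)) * C (σ i') < ((i' : ℕ) - (i : ℕ)) * C (σ i) :=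
    mul_lt_mul_of_pos_left h1 (by omega)
  linarith [hle, hX, hY, hmul]

/-- The descending sort of a valid vector is bounded by `lam`. -/
lemma sortDesc_le_lam {v : Fin k → ℕ} (hmono : ∀ i j : Fin k, i ≤ j → lam j ≤ lam i)
    (hv : ValidB lam v) (i : Fin k) : sortDesc v i ≤ lam i := by
  by_contra hc
  push_neg at hc
  -- cnt (sortDesc v) (lam i) ≥ i + 1
  have h1 : (i : ℕ) < cnt (sortDesc v) (lam i) :=
    (cnt_lt_iff (sortDesc_antitone v) i (lam i)).1 hc
  have h2 : cnt v (lam i) ≤ (i : ℕ) := by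
    have hsub : (univ.filter fun t => lam i < v t) ⊆ Finset.Iio i := by
      intro t htmem
      simp only [Finset.mem_filter, Finset.mem_univ, true_and] at htmem
      simp only [Finset.mem_Iio]
      by_contra hti
      push_neg at hti
      have := hmono i t hti
      have := hv.1 t
      omega
    have := Finset.card_le_card hsub
    rw [Fin.card_Iio] at this
    exact le_trans (le_of_eq rfl) this
  rw [cnt_congr (msOf_sortDesc v)] at h1
  omega

end Bij

section Weights
variable {n k : ℕ}

lemma extSeq_zero (g : Fin k → ℕ) : extSeq n k g 0 = n - k := rfl

lemma extSeq_succ (g : Fin k → ℕ) {i : ℕ} (h : i < k) :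
    extSeq n k g (i + 1) = g ⟨i, h⟩ := by
  unfold extSeq
  rw [if_neg (by omega), dif_pos ⟨by omega, by omega⟩]
  congr 1

lemma extSeq_past (g : Fin k → ℕ) {t : ℕ} (h : k < t) : extSeq n k g t = 0 := by
  unfold extSeq
  rw [if_neg (by omega), dif_neg (by omega)]

lemma extSeq_le (g : Fin k → ℕ) (hgm : ∀ i, g i ≤ n - k) (t : ℕ) :
    extSeq n k g t ≤ n - k := by
  unfold extSeq
  split_ifs with h1 h2
  · omega
  · exact hgm _
  · omega

lemma extSeq_antitone (g : Fin k → ℕ) (hg : ∀ i j : Fin k, i ≤ j → g j ≤ g i)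
    (hgm : ∀ i, g i ≤ n - k) {s t : ℕ} (hst : s ≤ t) :
    extSeq n k g t ≤ extSeq n k g s := by
  rcases Nat.eq_zero_or_pos s with rfl | hs
  · exact extSeq_le g hgm t
  rcases le_or_gt t k with htk | htk
  · have hsk : s - 1 < k := by omega
    have htk' : t - 1 < k := by omega
    rw [show s = (s-1) + 1 by omega, show t = (t-1) + 1 by omega,
      extSeq_succ g hsk, extSeq_succ g htk']
    exact hg _ _ (by simp [Fin.le_def]; omega)
  · rw [extSeq_past g htk]
    omega

lemma extSeq_lt_iff (g : Fin k → ℕ) (hg : ∀ i j : Fin k, i ≤ j → g j ≤ g i)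
    {x i : ℕ} (hx : x < n - k) (hi : i ≤ k) :
    x < extSeq n k g i ↔ i ≤ cnt g x := by
  rcases Nat.eq_zero_or_pos i with rfl | hpos
  · simp [extSeq_zero, hx]
  · have hik : i - 1 < k := by omega
    rw [show i = (i-1) + 1 by omega, extSeq_succ g hik, cnt_lt_iff hg]
    simp only [Fin.val_mk]
    omega

lemma extSeq_ge_iff (g : Fin k → ℕ) (hg : ∀ i j : Fin k, i ≤ j → g j ≤ g i)
    {x i : ℕ} (hi : i ≤ k) :
    extSeq n k g (i + 1) ≤ x ↔ cnt g x ≤ i := by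
  rcases eq_or_lt_of_le hi with rfl | hik
  · rw [extSeq_past g (by omega)]
    simp [cnt_le g x]
  · rw [extSeq_succ g hik, ← not_lt, ← not_lt, cnt_lt_iff hg]

lemma prod_Ico_telescope {M : Type*} [CommMonoid M] (h : ℕ → M) (e : ℕ → ℕ)
    (hanti : ∀ s t : ℕ, s ≤ t → e t ≤ e s) :
    ∀ N : ℕ, ∏ i ∈ range N, ∏ x ∈ Ico (e (i + 1)) (e i), h x = ∏ x ∈ Ico (e N) (e 0), h x := by
  intro N
  induction N with
  | zero => simp
  | succ N ih =>
    rw [Finset.prod_range_succ, ih, mul_comm, Finset.prod_Ico_consecutive]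
    · exact hanti N (N + 1) (by omega)
    · exact hanti 0 N (by omega)

variable {lam : Fin k → ℕ}

/-- Column `j` contains an `α` in `fillingOf lam v` iff some box `(i,j)` is uncovered. -/
lemma col_has_alpha {m : ℕ} {v : Fin k → ℕ} {j : Fin m}
    (hcol : ∃ i, v i ≤ (j : ℕ) ∧ (j : ℕ) < lam i) :
    ∃ i, fillingOf (m := m) lam v i j = some true := by
  classical
  set S : Finset (Fin k) := univ.filter fun t => v t ≤ (j : ℕ) ∧ (j : ℕ) < lam t with hS
  have hSne : S.Nonempty := by
    obtain ⟨i, hi⟩ := hcol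
    exact ⟨i, by simp [hS, hi.1, hi.2]⟩
  refine ⟨S.max' hSne, fo_true_iff.2 ⟨?_, ?_, ?_⟩⟩
  · exact (by simpa [hS] using S.max'_mem hSne : _ ∧ _).1
  · exact (by simpa [hS] using S.max'_mem hSne : _ ∧ _).2
  · intro t hlt ht
    exact absurd (S.le_max' t (by simp [hS, ht.1, ht.2])) (not_le.2 hlt)

lemma uncovered_iff_cnt {v : Fin k → ℕ} (hv1 : ∀ i, v i ≤ lam i) (x : ℕ) :
    (∀ i, ¬ (v i ≤ x ∧ x < lam i)) ↔ cnt lam x = cnt v x := by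
  classical
  have hsub : (univ.filter fun i => x < v i) ⊆ univ.filter fun i => x < lam i := by
    intro i hi
    simp only [Finset.mem_filter, Finset.mem_univ, true_and] at hi ⊢
    exact lt_of_lt_of_le hi (hv1 i)
  constructor
  · intro h
    unfold cnt
    congr 1
    apply Finset.Subset.antisymm _ hsub
    intro i hi
    simp only [Finset.mem_filter, Finset.mem_univ, true_and] at hi ⊢
    have := h i
    omega
  · intro h i hcon
    have heq := Finset.eq_of_subset_of_card_le hsub (le_of_eq h)
    have : i ∈ univ.filter fun i => x < lam i := by
      simp only [Finset.mem_filter, Finset.mem_univ, true_and]; exact hcon.2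
    rw [← heq] at this
    simp only [Finset.mem_filter, Finset.mem_univ, true_and] at this
    omega

lemma card_val_zero (g : Fin k → ℕ) :
    (univ.filter fun i => g i = 0).card + cnt g 0 = k := by
  classical
  unfold cnt
  rw [show (univ.filter fun i => 0 < g i) = univ.filter fun i => ¬ g i = 0 by
    ext i; simp [Nat.pos_iff_ne_zero]]
  rw [Finset.card_filter_add_card_filter_not]
  simp

/-- The filling-side weight in normal form. -/
lemma tabWeight_eq (a b : ℝ) {v : Fin k → ℕ} (hm : ∀ i, lam i ≤ n - k)
    (hv : ValidB lam v) :
    tabWeight a b n (fillingOf (m := n - k) lam v)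
      = (a * b) ^ n
        * a⁻¹ ^ ((univ.filter fun j : Fin (n - k) => cnt lam (j : ℕ) = cnt v (j : ℕ)).card)
        * b⁻¹ ^ ((univ.filter fun i : Fin k => v i = 0).card) := by
  unfold tabWeight
  have hA : (univ.filter fun j : Fin (n - k) =>
        ∀ i, fillingOf (m := n - k) lam v i j ≠ some true)
      = univ.filter fun j : Fin (n - k) => cnt lam (j : ℕ) = cnt v (j : ℕ) := by
    ext j
    simp only [Finset.mem_filter, Finset.mem_univ, true_and]
    constructor
    · intro hno
      rw [← uncovered_iff_cnt hv.1]
      intro i hcon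
      obtain ⟨i', hi'⟩ := col_has_alpha (lam := lam) ⟨i, hcon⟩
      exact hno i' hi'
    · intro hcnt i hcon
      obtain ⟨h1, h2, _⟩ := fo_true_iff.1 hcon
      exact ((uncovered_iff_cnt hv.1 (j : ℕ)).2 hcnt) i ⟨h1, h2⟩
  have hB : (univ.filter fun i : Fin k =>
        ∀ j : Fin (n - k), fillingOf (m := n - k) lam v i j ≠ some false)
      = univ.filter fun i : Fin k => v i = 0 := by
    ext i
    simp only [Finset.mem_filter, Finset.mem_univ, true_and]
    constructor
    · intro hno
      by_contra hne
      have hvm : v i ≤ n - k := le_trans (hv.1 i) (hm i)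
      exact hno ⟨v i - 1, by omega⟩ (fo_false_iff.2 (by simp only [Fin.val_mk]; omega))
    · intro h0 j hj
      have := fo_false_iff.1 hj
      omega
  rw [hA, hB]

/-- The path-side weight in normal form. -/
lemma pathWt_eq (a b : ℝ) (hmono : ∀ i j : Fin k, i ≤ j → lam j ≤ lam i)
    (hm : ∀ i, lam i ≤ n - k) {v : Fin k → ℕ} (hv : ValidB lam v) :
    pathWt a b n k lam (sortDesc v)
      = (a * b) ^ n
        * a⁻¹ ^ ((univ.filter fun j : Fin (n - k) => cnt lam (j : ℕ) = cnt v (j : ℕ)).card)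
        * b⁻¹ ^ ((univ.filter fun i : Fin k => v i = 0).card) := by
  classical
  set C := sortDesc v with hC
  have hCanti : ∀ i j : Fin k, i ≤ j → C j ≤ C i := sortDesc_antitone v
  have hCle : ∀ i, C i ≤ n - k := fun i =>
    le_trans (sortDesc_le_lam hmono hv i) (hm i)
  have hcntC : ∀ x, cnt C x = cnt v x := cnt_congr (msOf_sortDesc v)
  unfold pathWt pwt
  -- first factor
  have hP1 : (∏ i : Fin k, if C i = 0 then b⁻¹ else 1)
      = b⁻¹ ^ ((univ.filter fun i : Fin k => v i = 0).card) := by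
    rw [Finset.prod_ite, Finset.prod_const, Finset.prod_const, one_pow, mul_one]
    congr 1
    have e1 := card_val_zero C
    have e2 := card_val_zero v
    rw [hcntC 0] at e1
    omega
  -- second factor
  have hP2 : (∏ i ∈ range (k + 1), ∏ x ∈ Ico (extSeq n k C (i + 1)) (extSeq n k C i),
        if extSeq n k lam (i + 1) ≤ x ∧ x < extSeq n k lam i then a⁻¹ else 1)
      = a⁻¹ ^ ((univ.filter fun j : Fin (n - k) => cnt lam (j : ℕ) = cnt v (j : ℕ)).card) := by
    have hterm : ∀ i ∈ range (k + 1), ∀ x ∈ Ico (extSeq n k C (i + 1)) (extSeq n k C i),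
        (if extSeq n k lam (i + 1) ≤ x ∧ x < extSeq n k lam i then a⁻¹ else 1)
          = (if cnt lam x = cnt v x then a⁻¹ else 1) := by
      intro i hi x hx
      rw [Finset.mem_range] at hi
      rw [Finset.mem_Ico] at hx
      have hik : i ≤ k := by omega
      have hxm : x < n - k := lt_of_lt_of_le hx.2 (by
        have := extSeq_antitone C hCanti hCle (Nat.zero_le i)
        rwa [extSeq_zero] at this)
      have hcC : cnt C x = i := by
        have l1 := (extSeq_lt_iff C hCanti hxm hik).1 hx.2
        have l2 := (extSeq_ge_iff C hCanti hik).1 hx.1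
        omega
      apply if_congr _ rfl rfl
      rw [extSeq_ge_iff lam hmono hik, extSeq_lt_iff lam hmono hxm hik, ← hcntC x, hcC]
      omega
    rw [Finset.prod_congr rfl fun i hi => Finset.prod_congr rfl (hterm i hi)]
    rw [prod_Ico_telescope _ (extSeq n k C) (fun s t hst => extSeq_antitone C hCanti hCle hst) (k + 1)]
    rw [extSeq_past C (by omega), extSeq_zero, Nat.Ico_zero_eq_range]
    rw [← Fin.prod_univ_eq_prod_range (fun x => if cnt lam x = cnt v x then a⁻¹ else 1) (n - k)]
    rw [Finset.prod_ite, Finset.prod_const, Finset.prod_const, one_pow, mul_one]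
  rw [hP1, hP2]
  ring

end Weights

/-- **Weight-preserving bijection between Catalan paths and Catalan tableaux**
(Lemma 10 of the paper): for a type `τ` with exactly `k` ones and associated
shape `λ(τ)`, there is a weight-preserving bijection between Catalan paths of
size `(n,k)` constrained by the Young diagram of shape `λ(τ)` and Catalan
alternative tableaux of size `(n,k)` of type `τ`; in particular the weighted
sums agree: `Σ_C wt(C) = Σ_T wt(T)`. -/
theorem stmt4 (n k : ℕ) (a b : ℝ) (ha : a ≠ 0) (hb : b ≠ 0)
    (τ : Fin n → Bool) (hτ : onesCount τ = k)
    (lam : Fin k → ℕ) (hlam : ∀ i : Fin k, lam i = lambdaOf τ ((i : ℕ) + 1)) :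
    (∃ e : {C : Fin k → ℕ // IsCatalanPath lam C} ≃
        {f : Fin k → Fin (n - k) → Option Bool // IsCatalanFilling lam f},
      ∀ C, pathWt a b n k lam C.1 = tabWeight a b n (e C).1) ∧
    (∑ C ∈ (Fintype.piFinset fun i : Fin k => range (lam i + 1)).filter
        (fun C => ∀ i j : Fin k, i ≤ j → C j ≤ C i), pathWt a b n k lam C)
      = ∑ f : Fin k → Fin (n - k) → Option Bool,
          if IsCatalanFilling lam f then tabWeight a b n f else 0 := by
  
  classical
  -- monotonicity and boundedness of `lam`
  have hmono : ∀ i j : Fin k, i ≤ j → lam j ≤ lam i := by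
    intro i j hij
    rw [hlam i, hlam j]
    apply Finset.card_le_card
    intro p hp
    simp only [Finset.mem_filter, Finset.mem_univ, true_and] at hp ⊢
    have hij' : (i : ℕ) ≤ (j : ℕ) := hij
    exact ⟨hp.1, by omega⟩
  have hm : ∀ i : Fin k, lam i ≤ n - k := by
    intro i
    rw [hlam i]
    have h1 : lambdaOf τ ((i : ℕ) + 1) ≤ (univ.filter fun p : Fin n => τ p = false).card := by
      apply Finset.card_le_card
      intro p hp
      simp only [Finset.mem_filter, Finset.mem_univ, true_and] at hp ⊢
      exact hp.1
    have h2 : (univ.filter fun p : Fin n => τ p = false).card + onesCount τ = n := by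
      unfold onesCount
      rw [show (univ.filter fun p : Fin n => τ p = false)
          = univ.filter fun p : Fin n => ¬ τ p = true by ext p; simp]
      rw [add_comm, Finset.card_filter_add_card_filter_not]
      simp
    omega
  -- the bijection from tableaux to paths
  set Ψ : {f : Fin k → Fin (n - k) → Option Bool // IsCatalanFilling lam f} →
      {C : Fin k → ℕ // IsCatalanPath lam C} := fun f =>
    ⟨sortDesc (bOf f.1),
      fun i => sortDesc_le_lam hmono (bOf_valid f.2) i,
      fun i j hij => sortDesc_antitone _ i j hij⟩ with hΨ
  have hΨbij : Function.Bijective Ψ := by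
    constructor
    · intro f f' hff
      have h1 : sortDesc (bOf f.1) = sortDesc (bOf f'.1) := congrArg Subtype.val hff
      have hms : msOf (bOf f.1) = msOf (bOf f'.1) := by
        rw [← msOf_sortDesc (bOf f.1), ← msOf_sortDesc (bOf f'.1), h1]
      have heq := validB_ext (bOf_valid f.2) (bOf_valid f'.2) hms
      apply Subtype.ext
      rw [← fillingOf_bOf f.2, ← fillingOf_bOf f'.2, heq]
    · intro C
      obtain ⟨v, hvvalid, hvms⟩ := exists_validB hmono C.1 C.2
      refine ⟨⟨fillingOf lam v, isCatalanFilling_fillingOf hm hvvalid⟩, ?_⟩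
      apply Subtype.ext
      show sortDesc (bOf (fillingOf lam v)) = C.1
      rw [bOf_fillingOf hm hvvalid]
      apply antitone_unique (sortDesc_antitone v) (fun i j h => C.2.2 i j h)
      rw [msOf_sortDesc, hvms]
  set e := (Equiv.ofBijective Ψ hΨbij).symm with he
  have hΨe : ∀ C, Ψ (e C) = C := fun C => (Equiv.ofBijective Ψ hΨbij).apply_symm_apply C
  have hweight : ∀ f : {f // IsCatalanFilling lam f},
      pathWt a b n k lam (Ψ f).1 = tabWeight a b n f.1 := by
    intro f
    have hval := bOf_valid f.2
    show pathWt a b n k lam (sortDesc (bOf f.1)) = tabWeight a b n f.1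
    conv_rhs => rw [← fillingOf_bOf f.2]
    rw [tabWeight_eq a b hm hval, pathWt_eq a b hmono hm hval]
  have hwt : ∀ C, pathWt a b n k lam C.1 = tabWeight a b n (e C).1 := by
    intro C
    rw [← hweight (e C), hΨe C]
  refine ⟨⟨e, hwt⟩, ?_⟩
  -- the sum identity
  have hS : ∀ C : Fin k → ℕ,
      (C ∈ (Fintype.piFinset fun i : Fin k => range (lam i + 1)).filter
        (fun C => ∀ i j : Fin k, i ≤ j → C j ≤ C i)) ↔ IsCatalanPath lam C := by
    intro C
    rw [Finset.mem_filter, Fintype.mem_piFinset]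
    constructor
    · rintro ⟨h1, h2⟩
      exact ⟨fun i => by have := h1 i; rw [Finset.mem_range] at this; omega, h2⟩
    · rintro ⟨h1, h2⟩
      exact ⟨fun i => Finset.mem_range.2 (by have := h1 i; omega), h2⟩
  rw [show (∑ f : Fin k → Fin (n - k) → Option Bool,
      if IsCatalanFilling lam f then tabWeight a b n f else 0)
    = ∑ f ∈ univ.filter (fun f => IsCatalanFilling lam f), tabWeight a b n f from
      (Finset.sum_filter _ _).symm]
  refine Finset.sum_bij' (i := fun C hC => ((e ⟨C, (hS C).1 hC⟩ :
      {f // IsCatalanFilling lam f}) : _))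
    (j := fun f hf => ((e.symm ⟨f, (Finset.mem_filter.1 hf).2⟩ :
      {C // IsCatalanPath lam C}) : _)) ?_ ?_ ?_ ?_ ?_
  · intro C hC
    simp only [Finset.mem_filter, Finset.mem_univ, true_and]
    exact (e ⟨C, (hS C).1 hC⟩).2
  · intro f hf
    exact (hS _).2 (e.symm ⟨f, (Finset.mem_filter.1 hf).2⟩).2
  · intro C hC
    exact congrArg Subtype.val (e.symm_apply_apply ⟨C, (hS C).1 hC⟩)
  · intro f hf
    exact congrArg Subtype.val (e.apply_symm_apply ⟨f, (Finset.mem_filter.1 hf).2⟩)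
  · intro C hC
    exact hwt ⟨C, (hS C).1 hC⟩
end

section
/- Let τ ∈ {0,1}^n have exactly k ones and associated partition λ(τ) = (λ_1,…,λ_k). Then the number of Catalan alternative tableaux of type τ equals the number of k-tuples of integers (C_1,…,C_k) with λ_i ≥ C_i for all i and C_1 ≥ C_2 ≥ … ≥ C_k ≥ 0 (equivalently, the number of partitions with at most k parts contained in λ(τ)). -/
open Finset

set_option linter.unusedSectionVars false

/-- For `d < s.card` there is an element of `s` with exactly `d` larger elements in `s`. -/
lemma exists_nth (s : Finset ℕ) : ∀ d, d < s.card → ∃ x ∈ s, (s.filter fun y => x < y).card = d := by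
  intro d
  induction d with
  | zero =>
    intro hd
    obtain ⟨x, hx, hmax⟩ := s.exists_max_image id (card_pos.mp hd)
    exact ⟨x, hx, by
      rw [card_eq_zero, filter_eq_empty_iff]
      intro y hy
      exact not_lt.mpr (hmax y hy)⟩
  | succ d ih =>
    intro hd
    obtain ⟨x, hx, hcard⟩ := ih (Nat.lt_of_succ_lt hd)
    have hlt : (s.filter fun y => y < x).Nonempty := by
      by_contra h
      rw [not_nonempty_iff_eq_empty, filter_eq_empty_iff] at h
      -- then s = {x} ∪ bigger: card s = d+1 contradiction
      have : s ⊆ insert x (s.filter fun y => x < y) := by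
        intro y hy
        rcases lt_trichotomy y x with h1 | h1 | h1
        · exact absurd h1 (h hy)
        · simp [h1]
        · simp [mem_filter, hy, h1]
      have := card_le_card this
      have h2 := card_insert_le x (s.filter fun y => x < y)
      omega
    obtain ⟨x', hx', hmax⟩ := s.exists_max_image id (by
      obtain ⟨y, hy⟩ := hlt; exact ⟨y, (mem_filter.mp hy).1⟩)
    obtain ⟨z, hz, hzmax⟩ := (s.filter fun y => y < x).exists_max_image id hlt
    refine ⟨z, (mem_filter.mp hz).1, ?_⟩
    have hzx : z < x := (mem_filter.mp hz).2
    have : s.filter (fun y => z < y) = insert x (s.filter fun y => x < y) := by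
      ext y
      simp only [mem_filter, mem_insert]
      constructor
      · rintro ⟨hy, hzy⟩
        rcases lt_trichotomy y x with h1 | h1 | h1
        · exact absurd (hzmax y (mem_filter.mpr ⟨hy, h1⟩)) (not_le.mpr hzy)
        · exact Or.inl h1
        · exact Or.inr ⟨hy, h1⟩
      · rintro (rfl | ⟨hy, hxy⟩)
        · exact ⟨hx, hzx⟩
        · exact ⟨hy, lt_trans hzx hxy⟩
    rw [this, card_insert_of_notMem (by simp), hcard]

noncomputable def nth (s : Finset ℕ) (d : ℕ) : ℕ :=
  if h : d < s.card then (exists_nth s d h).choose else 0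

lemma nth_spec (s : Finset ℕ) (d : ℕ) (h : d < s.card) :
    nth s d ∈ s ∧ (s.filter fun y => nth s d < y).card = d := by
  rw [nth, dif_pos h]
  exact ⟨(exists_nth s d h).choose_spec.1, (exists_nth s d h).choose_spec.2⟩

section PartTwo

variable (k : ℕ) (L c : ℕ → ℕ)

noncomputable def Urec : ℕ → Finset ℕ
  | i =>
    if h : i < k then
      have : k - (i+1) < k - i := by omega
      let U := Urec (i + 1)
      U ∪ Ioc (nth ((range (L i + 1)) \ U) (c i - c (i + 1))) (L i)
    else ∅
  termination_by i => k - i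

noncomputable def vrec (i : ℕ) : ℕ :=
  nth ((range (L i + 1)) \ Urec k L c (i + 1)) (c i - c (i + 1))

lemma Urec_eq (i : ℕ) (h : i < k) :
    Urec k L c i = Urec k L c (i + 1) ∪ Ioc (vrec k L c i) (L i) := by
  rw [Urec, dif_pos h]; rfl

lemma Urec_eq_empty (i : ℕ) (h : ¬ i < k) : Urec k L c i = ∅ := by
  rw [Urec, dif_neg h]

variable (hL : ∀ i j, i ≤ j → L j ≤ L i) (hc : ∀ i j, i ≤ j → c j ≤ c i)
  (hcL : ∀ i, c i ≤ L i) (hck : ∀ i, k ≤ i → c i = 0)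

include hL hc hcL hck

lemma Urec_inv : ∀ t i, k ≤ i + t →
    Urec k L c i ⊆ Icc 1 (L i) ∧ (Urec k L c i).card = c i ∧
    (i < k → vrec k L c i ≤ L i ∧ vrec k L c i ∉ Urec k L c i) := by
  intro t
  induction t with
  | zero =>
    intro i hi
    rw [Urec_eq_empty k L c i (by omega)]
    refine ⟨empty_subset _, by simp [hck i (by omega)], fun h => absurd h (by omega)⟩
  | succ t iht =>
    intro i hi
    by_cases h : i < k
    · obtain ⟨ihsub, ihcard, _⟩ := iht (i + 1) (by omega)
      set U := Urec k L c (i + 1) with hU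
      have hUsub : U ⊆ range (L i + 1) := by
        intro x hx
        have := ihsub hx
        simp only [mem_Icc] at this
        have := hL i (i+1) (by omega)
        simp only [mem_range]; omega
      have hT : ((range (L i + 1)) \ U).card = L i + 1 - c (i + 1) := by
        rw [card_sdiff_of_subset hUsub, card_range, ihcard]
      have hd : c i - c (i + 1) < ((range (L i + 1)) \ U).card := by
        have h1 := hc i (i+1) (by omega)
        have h2 := hcL i
        omega
      obtain ⟨hvmem, hvcard⟩ := nth_spec _ _ hd
      have hv : vrec k L c i = nth ((range (L i + 1)) \ U) (c i - c (i + 1)) := rfl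
      rw [← hv] at hvmem hvcard
      set v := vrec k L c i
      have hvmem' : v ∈ (range (L i + 1)) \ U := hvmem
      rw [mem_sdiff, mem_range] at hvmem'
      have hveq : Urec k L c i = U ∪ Ioc v (L i) := Urec_eq k L c i h
      have hdisj : Ioc v (L i) \ U = ((range (L i + 1)) \ U).filter fun y => v < y := by
        ext y
        simp only [mem_sdiff, mem_Ioc, mem_filter, mem_range]
        constructor
        · rintro ⟨⟨h1, h2⟩, h3⟩; exact ⟨⟨by omega, h3⟩, h1⟩
        · rintro ⟨⟨h1, h2⟩, h3⟩; exact ⟨⟨h3, by omega⟩, h2⟩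
      refine ⟨?_, ?_, fun _ => ⟨by omega, ?_⟩⟩
      · rw [hveq]
        apply union_subset
        · exact ihsub.trans (Icc_subset_Icc_right (hL i (i+1) (by omega)))
        · intro x hx
          simp only [mem_Ioc] at hx
          simp only [mem_Icc]; omega
      · rw [hveq, ← union_sdiff_self_eq_union, card_union_of_disjoint disjoint_sdiff,
          hdisj, hvcard, ihcard]
        have h1 := hc i (i+1) (by omega)
        omega
      · rw [hveq, mem_union]
        push_neg
        exact ⟨hvmem'.2, by simp [mem_Ioc]⟩
    · rw [Urec_eq_empty k L c i h]
      exact ⟨empty_subset _, by simp [hck i (by omega)], fun h' => absurd h' h⟩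

omit hL hc hcL hck in
lemma mem_Urec : ∀ t i, k ≤ i + t → ∀ y,
    (y ∈ Urec k L c i ↔ ∃ j, i ≤ j ∧ j < k ∧ vrec k L c j < y ∧ y ≤ L j) := by
  intro t
  induction t with
  | zero =>
    intro i hi y
    rw [Urec_eq_empty k L c i (by omega)]
    simp only [notMem_empty, false_iff]
    rintro ⟨j, h1, h2, _⟩
    omega
  | succ t iht =>
    intro i hi y
    by_cases h : i < k
    · rw [Urec_eq k L c i h, mem_union, iht (i+1) (by omega) y, mem_Ioc]
      constructor
      · rintro (⟨j, h1, h2, h3⟩ | ⟨h1, h2⟩)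
        · exact ⟨j, by omega, h2, h3⟩
        · exact ⟨i, le_refl i, h, h1, h2⟩
      · rintro ⟨j, h1, h2, h3, h4⟩
        rcases eq_or_lt_of_le h1 with rfl | h5
        · exact Or.inr ⟨h3, h4⟩
        · exact Or.inl ⟨j, by omega, h2, h3, h4⟩
    · rw [Urec_eq_empty k L c i h]
      simp only [notMem_empty, false_iff]
      rintro ⟨j, h1, h2, _⟩
      omega

end PartTwo


section PartOne

variable {k m : ℕ} (lam : Fin k → ℕ)

def phi1 (f : Fin k → Fin m → Option Bool) : Fin k → ℕ :=
  fun i => ∑ j : Fin m, if f i j = some false then (j : ℕ) + 1 else 0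

def psi1 (v : Fin k → ℕ) : Fin k → Fin m → Option Bool := fun i j =>
  if (j : ℕ) + 1 = v i then some false
  else if v i ≤ (j : ℕ) ∧ (j : ℕ) < lam i ∧
      ∀ i' : Fin k, i < i' → ¬(v i' ≤ (j : ℕ) ∧ (j : ℕ) < lam i') then some true
  else none

variable {lam}

lemma psi1_false_iff {v : Fin k → ℕ} {i : Fin k} {j : Fin m} :
    psi1 lam v i j = some false ↔ (j : ℕ) + 1 = v i := by
  unfold psi1
  split_ifs with h1 h2 <;> simp_all

lemma psi1_true_iff {v : Fin k → ℕ} {i : Fin k} {j : Fin m} :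
    psi1 lam v i j = some true ↔ (v i ≤ (j : ℕ) ∧ (j : ℕ) < lam i ∧
      ∀ i' : Fin k, i < i' → ¬(v i' ≤ (j : ℕ) ∧ (j : ℕ) < lam i')) := by
  unfold psi1
  split_ifs with h1 h2
  · simp only [Option.some.injEq]
    constructor
    · intro h; exact absurd h (by simp)
    · intro h; omega
  · simp only [true_iff]
    exact h2
  · simp only [false_iff]
    exact h2

lemma psi1_none_iff {v : Fin k → ℕ} {i : Fin k} {j : Fin m} :
    psi1 lam v i j = none ↔ (¬ ((j : ℕ) + 1 = v i) ∧
      ¬ (v i ≤ (j : ℕ) ∧ (j : ℕ) < lam i ∧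
      ∀ i' : Fin k, i < i' → ¬(v i' ≤ (j : ℕ) ∧ (j : ℕ) < lam i'))) := by
  unfold psi1
  split_ifs with h1 h2 <;> simp_all

section CatalanStruct

variable {f : Fin k → Fin m → Option Bool} (hf : IsCatalanFilling lam f)
include hf

lemma beta_unique {i : Fin k} {j j' : Fin m} (h : f i j = some false)
    (h' : f i j' = some false) : j = j' := by
  rcases lt_trichotomy j j' with hlt | he | hlt
  · exact absurd (hf.2.2.1 i j' h' j hlt) (by rw [h]; simp)
  · exact he
  · exact absurd (hf.2.2.1 i j h j' hlt) (by rw [h']; simp)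

lemma phi1_eq_of_false {i : Fin k} {j : Fin m} (h : f i j = some false) :
    phi1 f i = (j : ℕ) + 1 := by
  rw [phi1, Finset.sum_eq_single_of_mem j (mem_univ j)]
  · rw [if_pos h]
  · intro j' _ hne
    rw [if_neg (fun hc => hne (beta_unique hf hc h))]

omit hf in
lemma phi1_eq_zero {i : Fin k} (h : ∀ j : Fin m, f i j ≠ some false) :
    phi1 f i = 0 := by
  rw [phi1]
  exact Finset.sum_eq_zero fun j _ => if_neg (h j)

lemma false_of_phi1 {i : Fin k} {j : Fin m} (h : (j : ℕ) + 1 = phi1 f i) :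
    f i j = some false := by
  by_cases hb : ∃ j₀ : Fin m, f i j₀ = some false
  · obtain ⟨j₀, hj₀⟩ := hb
    have := phi1_eq_of_false hf hj₀
    have hjj : j = j₀ := Fin.ext (by omega)
    rwa [hjj]
  · push_neg at hb
    rw [phi1_eq_zero hb] at h
    omega

lemma phi1_le {i : Fin k} : phi1 f i ≤ lam i := by
  by_cases hb : ∃ j₀ : Fin m, f i j₀ = some false
  · obtain ⟨j₀, hj₀⟩ := hb
    rw [phi1_eq_of_false hf hj₀]
    exact hf.1 i j₀ (by rw [hj₀]; simp)
  · push_neg at hb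
    rw [phi1_eq_zero hb]
    omega

lemma alpha_v_le {i : Fin k} {j : Fin m} (h : f i j = some true) :
    phi1 f i ≤ (j : ℕ) := by
  by_contra hc
  push_neg at hc
  have h1 : (j : ℕ) + 1 ≤ phi1 f i := hc
  by_cases he : (j : ℕ) + 1 = phi1 f i
  · have := false_of_phi1 hf he
    rw [h] at this; simp at this
  · by_cases hb : ∃ j₀ : Fin m, f i j₀ = some false
    · obtain ⟨j₀, hj₀⟩ := hb
      have hv := phi1_eq_of_false hf hj₀
      have hjlt : j < j₀ := by
        rw [Fin.lt_def]; omega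
      have := hf.2.2.1 i j₀ hj₀ j hjlt
      rw [h] at this; simp at this
    · push_neg at hb
      rw [phi1_eq_zero hb] at h1
      omega

lemma phi1_pair {i' i : Fin k} (hlt : i' < i) :
    phi1 f i' ≤ phi1 f i ∨ lam i < phi1 f i' := by
  by_contra hcon
  push_neg at hcon
  obtain ⟨hgt, hle⟩ := hcon
  have h1 : 1 ≤ phi1 f i' := by omega
  have hb' : ∃ j₀ : Fin m, f i' j₀ = some false := by
    by_contra hb
    push_neg at hb
    rw [phi1_eq_zero hb] at h1; omega
  obtain ⟨b, hb⟩ := hb'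
  have hbv : phi1 f i' = (b : ℕ) + 1 := phi1_eq_of_false hf hb
  have hblam : (b : ℕ) < lam i := by omega
  have hnotfalse : f i b ≠ some false := by
    intro hc
    have := phi1_eq_of_false hf hc
    omega
  have hnottrue : f i b ≠ some true := by
    intro hc
    have := hf.2.1 i b hc i' hlt
    rw [hb] at this; simp at this
  have hnone : f i b = none := by
    rcases hfb : f i b with _ | (_ | _)
    · rfl
    · exact absurd hfb hnotfalse
    · exact absurd hfb hnottrue
  rcases hf.2.2.2 i b hblam hnone with ⟨i₂, hi₂, ht⟩ | ⟨j₂, hj₂, hfalse⟩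
  · have := hf.2.1 i₂ b ht i' (hlt.trans hi₂)
    rw [hb] at this; simp at this
  · have := phi1_eq_of_false hf hfalse
    have : (b : ℕ) < (j₂ : ℕ) := hj₂
    omega

lemma alpha_char {i : Fin k} {j : Fin m} (h : f i j = some true) :
    phi1 f i ≤ (j : ℕ) ∧ (j : ℕ) < lam i ∧
      ∀ i' : Fin k, i < i' → ¬(phi1 f i' ≤ (j : ℕ) ∧ (j : ℕ) < lam i') := by
  refine ⟨alpha_v_le hf h, hf.1 i j (by rw [h]; simp), ?_⟩
  rintro i' hlt ⟨hle, hlam⟩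
  rcases hfb : f i' j with _ | (_ | _)
  · rcases hf.2.2.2 i' j hlam hfb with ⟨i₂, hi₂, ht⟩ | ⟨j₂, hj₂, hfalse⟩
    · have := hf.2.1 i₂ j ht i (hlt.trans hi₂)
      rw [h] at this; simp at this
    · have := phi1_eq_of_false hf hfalse
      have h2 : (j : ℕ) < (j₂ : ℕ) := hj₂
      omega
  · have := phi1_eq_of_false hf hfb
    omega
  · have := hf.2.1 i' j hfb i hlt
    rw [h] at this; simp at this

lemma alpha_char_rev {i : Fin k} {j : Fin m}
    (h : phi1 f i ≤ (j : ℕ) ∧ (j : ℕ) < lam i ∧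
      ∀ i' : Fin k, i < i' → ¬(phi1 f i' ≤ (j : ℕ) ∧ (j : ℕ) < lam i')) :
    f i j = some true := by
  obtain ⟨h1, h2, h3⟩ := h
  rcases hfb : f i j with _ | (_ | _)
  · rcases hf.2.2.2 i j h2 hfb with ⟨i₂, hi₂, ht⟩ | ⟨j₂, hj₂, hfalse⟩
    · exact absurd ⟨alpha_v_le hf ht, hf.1 i₂ j (by rw [ht]; simp)⟩ (h3 i₂ hi₂)
    · have := phi1_eq_of_false hf hfalse
      have hh : (j : ℕ) < (j₂ : ℕ) := hj₂
      omega
  · have := phi1_eq_of_false hf hfb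
    omega
  · rfl

lemma psi1_phi1 : psi1 lam (phi1 f) = f := by
  funext i j
  rcases hfb : f i j with _ | (_ | _)
  · rw [psi1_none_iff]
    constructor
    · intro hc
      have := false_of_phi1 hf hc
      rw [hfb] at this; simp at this
    · intro hc
      have := alpha_char_rev hf hc
      rw [hfb] at this; simp at this
  · rw [psi1_false_iff]
    exact (phi1_eq_of_false hf hfb).symm
  · rw [psi1_true_iff]
    exact alpha_char hf hfb

end CatalanStruct

section VSide

variable {v : Fin k → ℕ} (hv1 : ∀ i, v i ≤ lam i)
  (hv2 : ∀ i' i : Fin k, i' < i → v i' ≤ v i ∨ lam i < v i')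
  (hbd : ∀ i, lam i ≤ m)

include hv1 hv2 hbd

lemma psi1_catalan : IsCatalanFilling lam (psi1 (m := m) lam v) := by
  refine ⟨?_, ?_, ?_, ?_⟩
  · -- (o)
    intro i j hne
    rcases hfb : psi1 lam v i j with _ | (_ | _)
    · exact absurd hfb hne
    · have := psi1_false_iff.mp hfb
      have := hv1 i
      omega
    · exact (psi1_true_iff.mp hfb).2.1
  · -- (i)
    intro i j ht i' hlt
    obtain ⟨h1, h2, h3⟩ := psi1_true_iff.mp ht
    rw [psi1_none_iff]
    constructor
    · intro hc
      rcases hv2 i' i hlt with hp | hp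
      · omega
      · omega
    · rintro ⟨hc1, hc2, hc3⟩
      exact hc3 i hlt ⟨h1, h2⟩
  · -- (ii)
    intro i j hb j' hlt
    have h1 := psi1_false_iff.mp hb
    have hjj : (j' : ℕ) < (j : ℕ) := hlt
    rw [psi1_none_iff]
    refine ⟨by omega, ?_⟩
    rintro ⟨hc1, _, _⟩
    omega
  · -- (iii)
    intro i j hjlam hnone
    obtain ⟨hn1, hn2⟩ := psi1_none_iff.mp hnone
    by_cases hcase : v i ≤ (j : ℕ)
    · -- the α-clause must fail: some lower row needs column j
      left
      push_neg at hn2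
      obtain ⟨i₂, hi₂, hc₂⟩ := hn2 hcase hjlam
      -- take the maximal such row
      have hne : (univ.filter fun i'' : Fin k =>
          i < i'' ∧ v i'' ≤ (j : ℕ) ∧ (j : ℕ) < lam i'').Nonempty :=
        ⟨i₂, by simp only [mem_filter, mem_univ, true_and]; exact ⟨hi₂, hc₂⟩⟩
      obtain ⟨i₃, hi₃mem, hi₃max⟩ :=
        (univ.filter fun i'' : Fin k =>
          i < i'' ∧ v i'' ≤ (j : ℕ) ∧ (j : ℕ) < lam i'').exists_max_image id hne
      simp only [mem_filter, mem_univ, true_and] at hi₃mem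
      refine ⟨i₃, hi₃mem.1, ?_⟩
      rw [psi1_true_iff]
      refine ⟨hi₃mem.2.1, hi₃mem.2.2, ?_⟩
      rintro i₄ hi₄ ⟨hc41, hc42⟩
      have := hi₃max i₄ (by
        simp only [mem_filter, mem_univ, true_and]
        exact ⟨hi₃mem.1.trans hi₄, hc41, hc42⟩)
      simp only [id] at this
      exact absurd hi₄ (not_lt.mpr this)
    · -- the β of row i is strictly to the right
      right
      push_neg at hcase
      have hv : (j : ℕ) + 1 < v i := by omega
      have hvm : v i - 1 < m := by
        have := hv1 i; have := hbd i; omega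
      refine ⟨⟨v i - 1, hvm⟩, ?_, ?_⟩
      · rw [Fin.lt_def]; simp; omega
      · rw [psi1_false_iff]; simp; omega

lemma phi1_psi1 : phi1 (psi1 (m := m) lam v) = v := by
  funext i
  by_cases h0 : v i = 0
  · rw [phi1_eq_zero, h0]
    intro j hc
    have := psi1_false_iff.mp hc
    omega
  · have hvm : v i - 1 < m := by
      have := hv1 i; have := hbd i; omega
    have hb : psi1 lam v i ⟨v i - 1, hvm⟩ = some false := by
      rw [psi1_false_iff]; simp; omega
    have := phi1_eq_of_false (psi1_catalan hv1 hv2 hbd) hb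
    rw [this]; simp; omega

end VSide

end PartOne

section Glue

variable {k : ℕ} (lam : Fin k → ℕ)

/-- extension of a `Fin k`-indexed function to `ℕ` by `0`. -/
def extN (g : Fin k → ℕ) : ℕ → ℕ := fun i => if h : i < k then g ⟨i, h⟩ else 0

lemma extN_lt (g : Fin k → ℕ) (i : ℕ) (h : i < k) : extN g i = g ⟨i, h⟩ := dif_pos h

lemma extN_fin (g : Fin k → ℕ) (i : Fin k) : extN g (i : ℕ) = g i := by
  rw [extN, dif_pos i.isLt]

/-- the forward map from `v`'s to partitions. -/
def phi2 (v : Fin k → ℕ) : Fin k → ℕ := fun i =>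
  ((Icc 1 (lam i)).filter fun y => ∃ j : Fin k, i ≤ j ∧ v j < y ∧ y ≤ lam j).card

/-- `ℕ`-indexed version of the union sets. -/
def Wn (vN : ℕ → ℕ) (i : ℕ) : Finset ℕ :=
  (Icc 1 (extN lam i)).filter fun y =>
    ∃ j : Fin k, i ≤ (j : ℕ) ∧ vN (j : ℕ) < y ∧ y ≤ lam j

variable {lam}

lemma phi2_eq_Wn (v : Fin k → ℕ) (i : Fin k) :
    phi2 lam v i = (Wn lam (extN v) (i : ℕ)).card := by
  simp only [phi2, Wn, extN_fin, ← Fin.le_def]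

lemma Wn_step (hmono : ∀ i j : Fin k, i ≤ j → lam j ≤ lam i)
    (vN : ℕ → ℕ) (i : ℕ) (h : i < k) :
    Wn lam vN i = Wn lam vN (i + 1) ∪ Ioc (vN i) (extN lam i) := by
  have hLmono : ∀ i' j', i' ≤ j' → extN lam j' ≤ extN lam i' := by
    intro i' j' hle
    by_cases h1 : j' < k
    · rw [extN_lt lam j' h1, extN_lt lam i' (by omega)]
      exact hmono _ _ (by rw [Fin.le_def]; exact hle)
    · rw [extN, dif_neg h1]; omega
  ext y
  simp only [Wn, mem_union, mem_filter, mem_Icc, mem_Ioc]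
  constructor
  · rintro ⟨⟨hy1, hy2⟩, j, h1, h2, h3⟩
    rcases eq_or_lt_of_le h1 with heq | h5
    · refine Or.inr ⟨?_, ?_⟩
      · rw [heq]; exact h2
      · rw [extN_lt lam i h, show (⟨i, h⟩ : Fin k) = j from Fin.ext heq]; exact h3
    · refine Or.inl ⟨⟨hy1, ?_⟩, j, by omega, h2, h3⟩
      calc y ≤ lam j := h3
        _ = extN lam (j : ℕ) := (extN_fin lam j).symm
        _ ≤ extN lam (i+1) := hLmono (i+1) (j : ℕ) (by omega)
  · rintro (⟨⟨hy1, hy2⟩, j, h1, h2, h3⟩ | ⟨h1, h2⟩)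
    · exact ⟨⟨hy1, hy2.trans (hLmono i (i+1) (by omega))⟩, j, by omega, h2, h3⟩
    · refine ⟨⟨by omega, h2⟩, ⟨i, h⟩, le_refl i, h1, ?_⟩
      rw [← extN_lt lam i h]; exact h2

lemma phi2_le (v : Fin k → ℕ) (i : Fin k) : phi2 lam v i ≤ lam i := by
  rw [phi2]
  calc ((Icc 1 (lam i)).filter fun y => ∃ j : Fin k, i ≤ j ∧ v j < y ∧ y ≤ lam j).card
      ≤ (Icc 1 (lam i)).card := card_le_card (filter_subset _ _)
    _ = lam i := by rw [Nat.card_Icc]; omega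

lemma Wn_congr {vN vN' : ℕ → ℕ} (i : ℕ)
    (hagree : ∀ j : Fin k, i ≤ (j : ℕ) → vN (j : ℕ) = vN' (j : ℕ)) :
    Wn lam vN i = Wn lam vN' i := by
  rw [Wn, Wn]
  apply filter_congr
  intro y _
  constructor
  · rintro ⟨j, h1, h2, h3⟩
    exact ⟨j, h1, by rwa [← hagree j h1], h3⟩
  · rintro ⟨j, h1, h2, h3⟩
    exact ⟨j, h1, by rwa [hagree j h1], h3⟩

lemma phi2_lt_at (hmono : ∀ i j : Fin k, i ≤ j → lam j ≤ lam i)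
    {w w' : Fin k → ℕ} (hw'le : ∀ i, w' i ≤ lam i)
    (hw'V : ∀ i' i : Fin k, i' < i → w' i' ≤ w' i ∨ lam i < w' i')
    (i : Fin k) (hagree : ∀ j : Fin k, i < j → w j = w' j) (hlt : w i < w' i) :
    phi2 lam w' i < phi2 lam w i := by
  rw [phi2_eq_Wn, phi2_eq_Wn]
  apply card_lt_card
  have hstep : Wn lam (extN w) (i : ℕ) =
      Wn lam (extN w) ((i : ℕ) + 1) ∪ Ioc (extN w (i : ℕ)) (extN lam (i : ℕ)) :=
    Wn_step hmono _ _ i.isLt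
  have hstep' : Wn lam (extN w') (i : ℕ) =
      Wn lam (extN w') ((i : ℕ) + 1) ∪ Ioc (extN w' (i : ℕ)) (extN lam (i : ℕ)) :=
    Wn_step hmono _ _ i.isLt
  have hWeq : Wn lam (extN w) ((i : ℕ) + 1) = Wn lam (extN w') ((i : ℕ) + 1) := by
    apply Wn_congr
    intro j hj
    rw [extN_fin, extN_fin]
    exact hagree j (by rw [Fin.lt_def]; omega)
  constructor
  · -- subset
    rw [hstep, hstep', hWeq]
    apply union_subset_union_right
    apply Ioc_subset_Ioc_left
    rw [extN_fin, extN_fin]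
    omega
  · -- strictness : w' i is in Wn w but not in Wn w'
    intro hsub
    have hmem : w' i ∈ Wn lam (extN w) (i : ℕ) := by
      rw [hstep, mem_union, mem_Ioc, extN_fin, extN_fin lam]
      exact Or.inr ⟨hlt, hw'le i⟩
    have hnot : w' i ∉ Wn lam (extN w') (i : ℕ) := by
      rw [Wn, mem_filter]
      rintro ⟨_, j, h1, h2, h3⟩
      rw [extN_fin] at h2
      rcases eq_or_lt_of_le h1 with heq | h5
      · rw [show j = i from Fin.ext heq.symm] at h2
        omega
      · rcases hw'V i j (by rwa [Fin.lt_def]) with hp | hp <;> omega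
    exact hnot (hsub hmem)

theorem card_V_eq_card_C (hmono : ∀ i j : Fin k, i ≤ j → lam j ≤ lam i) :
    ((Fintype.piFinset fun i : Fin k => range (lam i + 1)).filter fun v =>
      ∀ i' i : Fin k, i' < i → v i' ≤ v i ∨ lam i < v i').card
    = ((Fintype.piFinset fun i : Fin k => range (lam i + 1)).filter fun C =>
      ∀ i j : Fin k, i ≤ j → C j ≤ C i).card := by
  apply card_bij (fun v _ => phi2 lam v)
  · -- membership
    intro v hv
    simp only [mem_filter, Fintype.mem_piFinset, mem_range] at hv ⊢
    refine ⟨fun i => by have := phi2_le (lam := lam) v i; omega, ?_⟩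
    intro i j hij
    rw [phi2, phi2]
    apply card_le_card
    intro y hy
    simp only [mem_filter, mem_Icc] at hy ⊢
    obtain ⟨⟨hy1, hy2⟩, j', h1, h2, h3⟩ := hy
    exact ⟨⟨hy1, hy2.trans (hmono i j hij)⟩, j', hij.trans h1, h2, h3⟩
  · -- injective
    intro v hv v' hv' heq
    by_contra hne
    have hex : (univ.filter fun i : Fin k => v i ≠ v' i).Nonempty := by
      by_contra hc
      rw [not_nonempty_iff_eq_empty, filter_eq_empty_iff] at hc
      exact hne (funext fun i => not_ne_iff.mp (hc (mem_univ i)))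
    set i := (univ.filter fun i : Fin k => v i ≠ v' i).max' hex with hi
    have himem := (univ.filter fun i : Fin k => v i ≠ v' i).max'_mem hex
    rw [← hi, mem_filter] at himem
    have hagree : ∀ j : Fin k, i < j → v j = v' j := by
      intro j hj
      by_contra hc
      have := (univ.filter fun i : Fin k => v i ≠ v' i).le_max' j
        (mem_filter.mpr ⟨mem_univ j, hc⟩)
      rw [← hi] at this
      exact absurd hj (not_lt.mpr this)
    simp only [mem_filter, Fintype.mem_piFinset, mem_range] at hv hv'
    have hfun := congrFun heq i
    rcases lt_or_gt_of_ne himem.2 with h | h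
    · have := phi2_lt_at hmono (fun i => by have := hv'.1 i; omega) hv'.2 i hagree h
      omega
    · have := phi2_lt_at hmono (fun i => by have := hv.1 i; omega) hv.2 i
        (fun j hj => (hagree j hj).symm) h
      omega
  · -- surjective
    intro C hC
    simp only [mem_filter, Fintype.mem_piFinset, mem_range] at hC
    obtain ⟨hC1, hC2⟩ := hC
    set L := extN lam with hL
    set cc := extN C with hcc
    have hLmono : ∀ a b, a ≤ b → L b ≤ L a := by
      intro a b hab
      by_cases h1 : b < k
      · rw [hL, extN_lt lam b h1, extN_lt lam a (by omega)]
        exact hmono _ _ (by rw [Fin.le_def]; exact hab)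
      · rw [hL, extN, dif_neg h1]; omega
    have hcmono : ∀ a b, a ≤ b → cc b ≤ cc a := by
      intro a b hab
      by_cases h1 : b < k
      · rw [hcc, extN_lt C b h1, extN_lt C a (by omega)]
        exact hC2 _ _ (by rw [Fin.le_def]; exact hab)
      · rw [hcc, extN, dif_neg h1]; omega
    have hcL : ∀ a, cc a ≤ L a := by
      intro a
      by_cases h1 : a < k
      · rw [hcc, hL, extN_lt C a h1, extN_lt lam a h1]
        have := hC1 ⟨a, h1⟩; omega
      · rw [hcc, hL, extN, extN, dif_neg h1, dif_neg h1]
    have hck : ∀ a, k ≤ a → cc a = 0 := by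
      intro a ha
      rw [hcc, extN, dif_neg (by omega)]
    have hinv := Urec_inv k L cc hLmono hcmono hcL hck k
    have hmemU := mem_Urec k L cc k
    refine ⟨fun i : Fin k => vrec k L cc (i : ℕ), mem_filter.mpr ⟨?_, ?_⟩, ?_⟩
    · rw [Fintype.mem_piFinset]
      intro i
      rw [mem_range]
      have h2 := ((hinv (i : ℕ) (by omega)).2.2 i.isLt).1
      have hLi : L (i : ℕ) = lam i := by rw [hL]; exact extN_fin lam i
      omega
    · intro i' i hlt
      by_contra hcon
      push_neg at hcon
      obtain ⟨h1, h2⟩ := hcon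
      have hmem : vrec k L cc (i' : ℕ) ∈ Urec k L cc (i' : ℕ) := by
        rw [hmemU (i' : ℕ) (by omega)]
        have hLi : L (i : ℕ) = lam i := by rw [hL]; exact extN_fin lam i
        exact ⟨(i : ℕ), le_of_lt hlt, i.isLt, h1, by omega⟩
      exact ((hinv (i' : ℕ) (by omega)).2.2 i'.isLt).2 hmem
    · funext i
      rw [phi2_eq_Wn]
      have hWU : Wn lam (extN fun i : Fin k => vrec k L cc (i : ℕ)) (i : ℕ)
          = Urec k L cc (i : ℕ) := by
        ext y
        rw [Wn, mem_filter, hmemU (i : ℕ) (by omega), mem_Icc]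
        constructor
        · rintro ⟨⟨hy1, hy2⟩, j, h1, h2, h3⟩
          rw [extN_fin] at h2
          have hLj : L (j : ℕ) = lam j := by rw [hL]; exact extN_fin lam j
          exact ⟨(j : ℕ), h1, j.isLt, h2, by omega⟩
        · rintro ⟨jn, h1, h2, h3, h4⟩
          have hLj : L jn = lam ⟨jn, h2⟩ := by rw [hL]; exact extN_lt lam jn h2
          rw [hLj] at h4
          have hyl : y ≤ lam i := h4.trans (hmono i ⟨jn, h2⟩ (by rw [Fin.le_def]; exact h1))
          refine ⟨⟨by omega, by rwa [extN_fin]⟩, ⟨jn, h2⟩, h1, ?_, h4⟩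
          rw [extN_fin]
          exact h3
      rw [hWU, (hinv (i : ℕ) (by omega)).2.1, hcc, extN_fin]


end Glue


theorem card_fillings_eq_card_V {k m : ℕ} (lam : Fin k → ℕ) (hbd : ∀ i, lam i ≤ m) :
    (univ.filter fun f : Fin k → Fin m → Option Bool => IsCatalanFilling lam f).card
    = ((Fintype.piFinset fun i : Fin k => range (lam i + 1)).filter fun v =>
      ∀ i' i : Fin k, i' < i → v i' ≤ v i ∨ lam i < v i').card := by
  apply card_nbij' (fun f => phi1 f) (fun v => psi1 lam v)
  · -- hi
    intro f hf
    rw [mem_coe, mem_filter] at hf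
    have hf' := hf.2
    rw [mem_coe, mem_filter, Fintype.mem_piFinset]
    refine ⟨fun i => mem_range.mpr (by have := phi1_le hf' (i := i); show phi1 f i < lam i + 1; omega), ?_⟩
    intro i' i hlt
    exact phi1_pair hf' hlt
  · -- hj
    intro v hv
    rw [mem_coe, mem_filter, Fintype.mem_piFinset] at hv
    obtain ⟨hv1, hv2⟩ := hv
    rw [mem_coe, mem_filter]
    exact ⟨mem_univ _, psi1_catalan (fun i => by have := mem_range.mp (hv1 i); omega) hv2 hbd⟩
  · -- left inv
    intro f hf
    rw [mem_coe, mem_filter] at hf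
    exact psi1_phi1 hf.2
  · -- right inv
    intro v hv
    rw [mem_coe, mem_filter, Fintype.mem_piFinset] at hv
    obtain ⟨hv1, hv2⟩ := hv
    exact phi1_psi1 (fun i => by have := mem_range.mp (hv1 i); omega) hv2 hbd

lemma lambdaOf_anti {n : ℕ} (τ : Fin n → Bool) {i j : ℕ} (h : i ≤ j) :
    lambdaOf τ j ≤ lambdaOf τ i := by
  apply card_le_card
  intro p hp
  rw [mem_filter] at hp ⊢
  exact ⟨hp.1, hp.2.1, h.trans hp.2.2⟩

lemma lambdaOf_le {n k : ℕ} (τ : Fin n → Bool) (hτ : onesCount τ = k) (i : ℕ) :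
    lambdaOf τ i ≤ n - k := by
  have h1 : lambdaOf τ i ≤ (univ.filter fun p : Fin n => τ p = false).card := by
    apply card_le_card
    intro p hp
    rw [mem_filter] at hp ⊢
    exact ⟨hp.1, hp.2.1⟩
  have h2 : (univ.filter fun p : Fin n => τ p = true).card
      + (univ.filter fun p : Fin n => τ p = false).card = n := by
    have := Finset.card_filter_add_card_filter_not
      (s := (univ : Finset (Fin n))) (p := fun p => τ p = true)
    rw [card_univ, Fintype.card_fin] at this
    have heq : (univ.filter fun p : Fin n => τ p = false)
        = (univ.filter fun p : Fin n => ¬ τ p = true) := by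
      apply filter_congr
      intro p _
      simp [Bool.not_eq_true]
    rw [heq]
    exact this
  rw [onesCount] at hτ
  omega


/-- The number of Catalan alternative tableaux of type `τ` equals the number of
`k`-tuples `(C_1, …, C_k)` with `λ_i ≥ C_i` and `C_1 ≥ C_2 ≥ … ≥ C_k ≥ 0`,
i.e. the number of partitions with at most `k` parts contained in `λ(τ)`. -/
theorem stmt5 (n k : ℕ) (τ : Fin n → Bool) (hτ : onesCount τ = k)
    (lam : Fin k → ℕ) (hlam : ∀ i : Fin k, lam i = lambdaOf τ ((i : ℕ) + 1)) :
    (univ.filter fun f : Fin k → Fin (n - k) → Option Bool => IsCatalanFilling lam f).card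
      = ((Fintype.piFinset fun i : Fin k => range (lam i + 1)).filter
          (fun C => ∀ i j : Fin k, i ≤ j → C j ≤ C i)).card := by
  have hbd : ∀ i : Fin k, lam i ≤ n - k := fun i => by
    rw [hlam i]; exact lambdaOf_le τ hτ _
  have hmono : ∀ i j : Fin k, i ≤ j → lam j ≤ lam i := fun i j hij => by
    rw [hlam i, hlam j]
    exact lambdaOf_anti τ (by have : (i : ℕ) ≤ (j : ℕ) := hij; omega)
  rw [card_fillings_eq_card_V lam hbd, card_V_eq_card_C hmono]
end
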